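/- Let a, b ∈ ℂ with a ≠ 1 and let g ∈ ℂ[x]. If (x + λ + b) divides (x + aλ + b)·g(x + λ) in the polynomial ring ℂ[x, λ], then (x + b) divides g(x) in ℂ[x]. -/

import Mathlib

open MvPolynomial

theorem stmt_10 (a b : ℂ) (ha : a ≠ 1) (g : Polynomial ℂ)
    (h : (X 0 + X 1 + C b : MvPolynomial (Fin 2) ℂ) ∣
        (X 0 + C a * X 1 + C b) * Polynomial.aeval (X 0 + X 1 : MvPolynomial (Fin 2) ℂ) g) :
    (Polynomial.X + Polynomial.C b) ∣ g := by
  set φ : MvPolynomial (Fin 2) ℂ →ₐ[ℂ] Polynomial ℂ :=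
    aeval ![Polynomial.X, -(Polynomial.X + Polynomial.C b)] with hφ
  obtain ⟨q, hq⟩ := h
  have key := congrArg φ hq
  have h0 : φ (X 0 + X 1 + C b) = 0 := by
    simp [hφ]
  simp only [map_mul] at key
  rw [h0, zero_mul] at key
  have h1 : φ (X 0 + C a * X 1 + C b) =
      Polynomial.C (1 - a) * (Polynomial.X + Polynomial.C b) := by
    simp [hφ]; ring
  have h2 : φ (Polynomial.aeval (X 0 + X 1 : MvPolynomial (Fin 2) ℂ) g) =
      Polynomial.C (g.eval (-b)) := by
    rw [← Polynomial.aeval_algHom_apply]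
    have : φ (X 0 + X 1 : MvPolynomial (Fin 2) ℂ) = Polynomial.C (-b) := by
      simp [hφ]
    rw [this]
    have := Polynomial.aeval_algebraMap_apply (Polynomial ℂ) (-b) g
    simpa [Polynomial.algebraMap_eq] using this
  rw [h1, h2] at key
  have hXb : (Polynomial.X + Polynomial.C b : Polynomial ℂ) ≠ 0 := by
    intro hc
    have := congrArg (Polynomial.coeff · 1) hc
    simp at this
  have hroot : g.eval (-b) = 0 := by
    have : Polynomial.C (1 - a) * Polynomial.C (g.eval (-b)) *
        (Polynomial.X + Polynomial.C b) = 0 := by linear_combination key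
    rcases mul_eq_zero.mp this with h' | h'
    · rcases mul_eq_zero.mp h' with h'' | h''
      · exact absurd (sub_eq_zero.mp (Polynomial.C_eq_zero.mp h'')).symm ha
      · exact Polynomial.C_eq_zero.mp h''
    · exact absurd h' hXb
  have : Polynomial.X - Polynomial.C (-b) ∣ g := Polynomial.dvd_iff_isRoot.mpr hroot
  simpa [sub_neg_eq_add] using this
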